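/- Let s > 0, D > 0, 0 < a < r, R₁ > a, R₂ > a satisfy 2a/R₁ + a/R₂ < 1, and write P̄(s,x) = (a/(s·x))·exp(−(x−a)·√(s/D)). Then the double series ∑_{n=0}^{∞} (−1)ⁿ·(aⁿ⁺¹/r)·∑_{k=0}^{n} C(n,k)·(2ᵏ/(R₁ᵏ·R₂ⁿ⁻ᵏ))·(1/s)·exp(−(r − a + k·(R₁ − a) + (n−k)·(R₂ − a))·√(s/D)) converges absolutely and its sum equals P̄(s,r)/(1 + 2·s·P̄(s,R₁) + s·P̄(s,R₂)). -/

import Mathlib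

/-- Laplace transform of the single-FAR hitting probability:
`P̄(s,x) = (a/(s·x))·exp(−(x−a)·√(s/D))`. -/
noncomputable def Pbar (a D s x : ℝ) : ℝ :=
  a / (s * x) * Real.exp (-(x - a) * Real.sqrt (s / D))

/-- Laplace-domain binomial-series expansion of the UCA-4 hitting probability
(equation UCA4 of Theorem 4). -/
theorem stmt10 (s D a r R₁ R₂ : ℝ) (hs : 0 < s) (hD : 0 < D)
    (ha : 0 < a) (har : a < r) (hR₁ : a < R₁) (hR₂ : a < R₂)
    (hsmall : 2 * a / R₁ + a / R₂ < 1) :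
    Summable (fun n : ℕ =>
      |(-1 : ℝ) ^ n * (a ^ (n + 1) / r) *
        ∑ k ∈ Finset.range (n + 1), (n.choose k : ℝ) *
          (2 ^ k / (R₁ ^ k * R₂ ^ (n - k))) * (1 / s) *
          Real.exp (-(r - a + k * (R₁ - a) + (n - k : ℕ) * (R₂ - a)) *
            Real.sqrt (s / D))|) ∧
    (∑' n : ℕ, (-1 : ℝ) ^ n * (a ^ (n + 1) / r) *
        ∑ k ∈ Finset.range (n + 1), (n.choose k : ℝ) *
          (2 ^ k / (R₁ ^ k * R₂ ^ (n - k))) * (1 / s) *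
          Real.exp (-(r - a + k * (R₁ - a) + (n - k : ℕ) * (R₂ - a)) *
            Real.sqrt (s / D))) =
      Pbar a D s r / (1 + 2 * (s * Pbar a D s R₁) + s * Pbar a D s R₂) := by
  have hR₁0 : (0:ℝ) < R₁ := ha.trans hR₁
  have hR₂0 : (0:ℝ) < R₂ := ha.trans hR₂
  set q : ℝ := Real.sqrt (s / D) with hqdef
  have hq : 0 ≤ q := Real.sqrt_nonneg _
  set x₁ : ℝ := 2 / R₁ * Real.exp (-(R₁ - a) * q) with hx₁
  set x₂ : ℝ := 1 / R₂ * Real.exp (-(R₂ - a) * q) with hx₂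
  set w : ℝ := a * (x₁ + x₂) with hwdef
  have he₁ : Real.exp (-(R₁ - a) * q) ≤ 1 := by
    apply Real.exp_le_one_iff.2
    nlinarith
  have he₂ : Real.exp (-(R₂ - a) * q) ≤ 1 := by
    apply Real.exp_le_one_iff.2
    nlinarith
  have hw0 : 0 ≤ w := by
    have := Real.exp_pos (-(R₁ - a) * q)
    have := Real.exp_pos (-(R₂ - a) * q)
    rw [hwdef, hx₁, hx₂]; positivity
  have hw1 : w < 1 := by
    have h1 : w ≤ a * (2 / R₁ * 1 + 1 / R₂ * 1) := by
      rw [hwdef, hx₁, hx₂]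
      gcongr <;> positivity
    have h2 : a * (2 / R₁ * 1 + 1 / R₂ * 1) = 2 * a / R₁ + a / R₂ := by
      field_simp
    linarith [h1, h2 ▸ h1]
  -- term identity
  have hterm : ∀ n : ℕ,
      (-1 : ℝ) ^ n * (a ^ (n + 1) / r) *
        ∑ k ∈ Finset.range (n + 1), (n.choose k : ℝ) *
          (2 ^ k / (R₁ ^ k * R₂ ^ (n - k))) * (1 / s) *
          Real.exp (-(r - a + k * (R₁ - a) + (n - k : ℕ) * (R₂ - a)) * q)
        = Pbar a D s r * (-w) ^ n := by
    intro n
    have hinner : ∑ k ∈ Finset.range (n + 1), (n.choose k : ℝ) *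
          (2 ^ k / (R₁ ^ k * R₂ ^ (n - k))) * (1 / s) *
          Real.exp (-(r - a + k * (R₁ - a) + (n - k : ℕ) * (R₂ - a)) * q)
        = (1 / s * Real.exp (-(r - a) * q)) * (x₁ + x₂) ^ n := by
      rw [add_pow, Finset.mul_sum]
      refine Finset.sum_congr rfl fun k hk => ?_
      have harg : (-(r - a + k * (R₁ - a) + (n - k : ℕ) * (R₂ - a)) * q)
          = (-(r - a) * q) + ((k : ℝ) * (-(R₁ - a) * q)) + (((n - k : ℕ) : ℝ) * (-(R₂ - a) * q)) := by
        ring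
      rw [harg, Real.exp_add, Real.exp_add, Real.exp_nat_mul, Real.exp_nat_mul,
        hx₁, hx₂, mul_pow, mul_pow, div_pow, div_pow]
      field_simp
      ring
    have hp : (-w) ^ n = (-1 : ℝ) ^ n * a ^ n * (x₁ + x₂) ^ n := by
      rw [hwdef, show -(a * (x₁ + x₂)) = -1 * a * (x₁ + x₂) by ring, mul_pow, mul_pow]
    rw [hinner, Pbar, hqdef, hp]
    ring
  have habs : ∀ n : ℕ, |Pbar a D s r * (-w) ^ n| = |Pbar a D s r| * w ^ n := by
    intro n
    rw [abs_mul, abs_pow, abs_neg, abs_of_nonneg hw0]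
  have hsum : Summable (fun n : ℕ => |Pbar a D s r| * w ^ n) :=
    (summable_geometric_of_lt_one hw0 hw1).mul_left _
  constructor
  · refine hsum.congr fun n => ?_
    rw [← habs n, hterm n]
  · have hgeo : ∑' n : ℕ, (-w) ^ n = (1 - -w)⁻¹ := by
      apply tsum_geometric_of_norm_lt_one
      rw [norm_neg, Real.norm_eq_abs, abs_of_nonneg hw0]
      exact hw1
    calc (∑' n : ℕ, (-1 : ℝ) ^ n * (a ^ (n + 1) / r) *
        ∑ k ∈ Finset.range (n + 1), (n.choose k : ℝ) *
          (2 ^ k / (R₁ ^ k * R₂ ^ (n - k))) * (1 / s) *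
          Real.exp (-(r - a + k * (R₁ - a) + (n - k : ℕ) * (R₂ - a)) * q))
        = ∑' n : ℕ, Pbar a D s r * (-w) ^ n := by
          exact tsum_congr hterm
      _ = Pbar a D s r * (1 - -w)⁻¹ := by rw [tsum_mul_left, hgeo]
      _ = Pbar a D s r / (1 + 2 * (s * Pbar a D s R₁) + s * Pbar a D s R₂) := by
          have hden : 1 + 2 * (s * Pbar a D s R₁) + s * Pbar a D s R₂ = 1 + w := by
            rw [Pbar, Pbar, hwdef, hx₁, hx₂, hqdef]
            field_simp
            ring
          rw [hden, div_eq_mul_inv, sub_neg_eq_add]
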